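/- For linear maps φ : ℚ[z_J] → ℚ[z_K] and ψ : ℚ[z_K] → ℚ[z_L] between polynomial rings, the generating function of the composition ψ ∘ φ is obtained by contraction: G(ψ ∘ φ) = (G(φ)|_{z_K ↦ ∂_{ζ_K}} · G(ψ))|_{ζ_K = 0}. -/

import Mathlib

noncomputable section

/-- The multi-index factorial `n! = ∏_j (n_j)!`. -/
def mfact {J : Type*} (n : J →₀ ℕ) : ℕ := n.prod fun _ k => k.factorial

/-- The exponential generating function of a linear map `φ : ℚ[z_J] → ℚ[z_K]`:
the coefficient of `ζ_J^n` in `G(φ)` is `φ(z_J^n)/n!`. -/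
def genFun {J K : Type*} (φ : MvPolynomial J ℚ →ₗ[ℚ] MvPolynomial K ℚ) :
    MvPowerSeries J (MvPolynomial K ℚ) :=
  fun n => ((mfact n : ℚ)⁻¹) • φ (MvPolynomial.monomial n 1)

/-- Contraction of generating functions: for `f ∈ ℚ[z_K][[ζ_J]]` and
`g ∈ ℚ[z_L][[ζ_K]]`, the element `(f|_{z_K ↦ ∂_{ζ_K}} · g)|_{ζ_K = 0}` of
`ℚ[z_L][[ζ_J]]`.  Its coefficient at `ζ_J^n` is
`Σ_m m! · (coeff of z_K^m in the ζ_J^n-coefficient of f) · (coeff of ζ_K^m in g)`,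
where the (finite) sum runs over the support of the polynomial coefficient. -/
def contractGF {J K L : Type*} (f : MvPowerSeries J (MvPolynomial K ℚ))
    (g : MvPowerSeries K (MvPolynomial L ℚ)) :
    MvPowerSeries J (MvPolynomial L ℚ) :=
  fun n => ∑ m ∈ (MvPowerSeries.coeff n f).support,
    ((mfact m : ℚ) *
        MvPolynomial.coeff m (MvPowerSeries.coeff n f)) •
      MvPowerSeries.coeff m g

lemma mfact_ne_zero {J : Type*} (n : J →₀ ℕ) : (mfact n : ℚ) ≠ 0 := by
  have : mfact n ≠ 0 := by
    unfold mfact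
    exact Finset.prod_ne_zero_iff.mpr fun i _ => Nat.factorial_ne_zero _
  exact_mod_cast this

/-- For linear maps `φ : ℚ[z_J] → ℚ[z_K]` and `ψ : ℚ[z_K] → ℚ[z_L]`,
the generating function of the composition is the contraction of the
generating functions: `G(ψ ∘ φ) = (G(φ)|_{z_K ↦ ∂_{ζ_K}} · G(ψ))|_{ζ_K = 0}`. -/
theorem genFun_comp (J K L : Type*) [Finite J] [Finite K] [Finite L]
    (φ : MvPolynomial J ℚ →ₗ[ℚ] MvPolynomial K ℚ)
    (ψ : MvPolynomial K ℚ →ₗ[ℚ] MvPolynomial L ℚ) :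
    genFun (ψ ∘ₗ φ) = contractGF (genFun φ) (genFun ψ) := by
  funext n
  set P := φ (MvPolynomial.monomial n 1) with hP
  have hcf : MvPowerSeries.coeff n (genFun φ)
      = (mfact n : ℚ)⁻¹ • P := rfl
  have hsupp : (MvPowerSeries.coeff n (genFun φ)).support
      = P.support := by
    rw [hcf]
    exact MvPolynomial.support_smul_eq (inv_ne_zero (mfact_ne_zero n)) P
  show (genFun (ψ ∘ₗ φ)) n = _
  unfold contractGF
  rw [hsupp]
  have step : ∀ m ∈ P.support,
      ((mfact m : ℚ) *
        MvPolynomial.coeff m (MvPowerSeries.coeff n (genFun φ))) •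
      MvPowerSeries.coeff m (genFun ψ)
      = (mfact n : ℚ)⁻¹ • (MvPolynomial.coeff m P • ψ (MvPolynomial.monomial m 1)) := by
    intro m _
    rw [hcf]
    have : MvPowerSeries.coeff m (genFun ψ)
        = (mfact m : ℚ)⁻¹ • ψ (MvPolynomial.monomial m 1) := rfl
    rw [this, MvPolynomial.coeff_smul, smul_eq_mul, smul_smul, smul_smul]
    congr 1
    rw [mul_comm (mfact m : ℚ), mul_assoc, mul_assoc,
      mul_inv_cancel₀ (mfact_ne_zero m), mul_one]
  rw [Finset.sum_congr rfl step, ← Finset.smul_sum]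
  have : ∑ m ∈ P.support, MvPolynomial.coeff m P • ψ (MvPolynomial.monomial m 1)
      = ψ P := by
    simp_rw [← LinearMap.map_smul, ← map_sum]
    congr 1
    conv_rhs => rw [P.as_sum]
    refine Finset.sum_congr rfl fun m _ => ?_
    simp [MvPolynomial.smul_monomial]
  rw [this]
  rfl
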